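/- arXiv:2107.00610 — 3 statements merged into one kernel-verified Lean document; each statement's English description precedes it below -/
import Mathlib

section
/- Let η > 1 and M > 0. For every measurable nonnegative function ρ on ℝ² with ∫_{ℝ²} ρ dx = M, such that ρ log ρ and x ↦ log(1+|x|²)ρ(x) are integrable, one has ∫_{ℝ²} ρ log(ρ/M) dx + η ∫_{ℝ²} log(1+|x|²) ρ(x) dx ≥ M log((η−1)/π). Moreover equality is achieved by ρ = M ρ_η, where ρ_η(x) := (η−1) / (π (1+|x|²)^η). -/
open MeasureTheory Real Set Filter

noncomputable section

abbrev R2 : Type := EuclideanSpace ℝ (Fin 2)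




lemma radial (f : ℝ → ℝ) :
    ∫ x : R2, f ‖x‖ = 2 * π * ∫ y in Ioi (0:ℝ), y * f y := by
  rw [MeasureTheory.integral_fun_norm_addHaar (volume : Measure R2) f]
  have hdim : Module.finrank ℝ R2 = 2 := by simp [finrank_euclideanSpace]
  have hball : (volume (Metric.ball (0:R2) 1)).toReal = π := by
    rw [EuclideanSpace.volume_ball]
    norm_num [Real.Gamma_two, Real.sq_sqrt Real.pi_nonneg, ENNReal.toReal_ofReal Real.pi_nonneg]
  rw [hdim, measureReal_def, hball]
  rw [smul_eq_mul, nsmul_eq_mul]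
  push_cast
  rw [show (2:ℝ) * (π * ∫ y in Ioi (0:ℝ), y ^ (2-1) • f y) = 2 * π * ∫ y in Ioi (0:ℝ), y ^ 1 • f y by ring]
  congr 1
  refine setIntegral_congr_fun measurableSet_Ioi fun y _ => ?_
  simp [smul_eq_mul]

variable {η : ℝ}




lemma hasDerivAt_u (r : ℝ) : HasDerivAt (fun r : ℝ => 1 + r ^ 2) (2 * r) r := by
  simpa using ((hasDerivAt_pow 2 r).const_add 1)

lemma upos (r : ℝ) : (0:ℝ) < 1 + r ^ 2 := by positivity

lemma hasDerivAt_upow (c : ℝ) (r : ℝ) :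
    HasDerivAt (fun r : ℝ => (1 + r ^ 2) ^ c) (2 * r * c * (1 + r ^ 2) ^ (c - 1)) r :=
  (hasDerivAt_u r).rpow_const (Or.inl (upos r).ne')

lemma tendsto_u : Tendsto (fun r : ℝ => 1 + r ^ 2) atTop atTop := by
  exact tendsto_atTop_add_const_left _ 1 (tendsto_pow_atTop two_ne_zero)

lemma oneD1 (hη : 1 < η) :
    ∫ r in Ioi (0:ℝ), r * (1 + r ^ 2) ^ (-η) = 1 / (2 * (η - 1)) := by
  have ha : η - 1 ≠ 0 := by linarith
  have h := integral_Ioi_of_hasDerivAt_of_nonneg'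
      (g := fun r : ℝ => -(1 + r ^ 2) ^ (1 - η) / (2 * (η - 1)))
      (g' := fun r : ℝ => r * (1 + r ^ 2) ^ (-η)) (a := 0) (l := 0)
      (fun r _ => ?_) (fun r hr => by have : (0:ℝ) < r := hr; positivity) ?_
  · rw [h]; simp; field_simp
  · have := ((hasDerivAt_upow (1 - η) r).neg).div_const (2 * (η - 1))
    refine this.congr_deriv ?_
    have h1 : (1 : ℝ) - η - 1 = -η := by ring
    rw [h1]; field_simp; ring
  · have h1 : Tendsto (fun u : ℝ => u ^ (1 - η)) atTop (nhds 0) := by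
      have := tendsto_rpow_neg_atTop (y := η - 1) (by linarith)
      simpa [neg_sub] using this
    have := (h1.comp tendsto_u).neg.div_const (2 * (η - 1))
    simpa using this

lemma oneD2 (hη : 1 < η) :
    ∫ r in Ioi (0:ℝ), r * (log (1 + r ^ 2) * (1 + r ^ 2) ^ (-η))
      = 1 / (2 * (η - 1) ^ 2) := by
  have ha : η - 1 ≠ 0 := by linarith
  have h := integral_Ioi_of_hasDerivAt_of_nonneg'
      (g := fun r : ℝ => -((1 + r ^ 2) ^ (1 - η) *
          (log (1 + r ^ 2) / (2 * (η - 1)) + 1 / (2 * (η - 1) ^ 2))))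
      (g' := fun r : ℝ => r * (log (1 + r ^ 2) * (1 + r ^ 2) ^ (-η))) (a := 0) (l := 0)
      (fun r _ => ?_) (fun r hr => ?_) ?_
  · rw [h]; norm_num
  · have hlog : HasDerivAt (fun r : ℝ => log (1 + r ^ 2)) (2 * r / (1 + r ^ 2)) r :=
      (hasDerivAt_u r).log (upos r).ne'
    have hd := ((hasDerivAt_upow (1 - η) r).mul
      ((hlog.div_const (2 * (η - 1))).add_const (1 / (2 * (η - 1) ^ 2)))).neg
    refine hd.congr_deriv ?_
    have h1 : (1 : ℝ) - η - 1 = -η := by ring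
    rw [h1]
    have h2 : ((1:ℝ) + r ^ 2) ^ (1 - η) = (1 + r ^ 2) ^ (-η) * (1 + r ^ 2) := by
      rw [← Real.rpow_add_one (upos r).ne']; ring_nf
    rw [h2]
    field_simp
    ring
  · have : 0 ≤ log (1 + r ^ 2) := Real.log_nonneg (by nlinarith [sq_nonneg r])
    have : (0:ℝ) < r := hr
    positivity
  · have h1 : Tendsto (fun u : ℝ => u ^ (1 - η) * (log u / (2 * (η - 1)) + 1 / (2 * (η - 1) ^ 2)))
        atTop (nhds 0) := by
      have hA : Tendsto (fun u : ℝ => u ^ (1 - η) * log u) atTop (nhds 0) := by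
        have := (isLittleO_log_rpow_atTop (by linarith : (0:ℝ) < η - 1)).tendsto_div_nhds_zero
        refine this.congr' ?_
        filter_upwards [eventually_gt_atTop 0] with u hu
        rw [show (1:ℝ) - η = -(η - 1) by ring, Real.rpow_neg hu.le, div_eq_mul_inv, mul_comm]
      have hB : Tendsto (fun u : ℝ => u ^ (1 - η)) atTop (nhds 0) := by
        have := tendsto_rpow_neg_atTop (y := η - 1) (by linarith)
        simpa [neg_sub] using this
      have := (hA.div_const (2 * (η - 1))).add (hB.mul_const (1 / (2 * (η - 1) ^ 2)))
      simpa [mul_add, mul_div_assoc] using this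
    have := (h1.comp tendsto_u).neg
    simpa using this









lemma int1 (hη : 1 < η) : ∫ x : R2, ((1:ℝ) + ‖x‖ ^ 2) ^ (-η) = π / (η - 1) := by
  have := radial (fun t => ((1:ℝ) + t ^ 2) ^ (-η))
  rw [this, oneD1 hη]
  have : η - 1 ≠ 0 := by linarith
  field_simp

lemma int2 (hη : 1 < η) :
    ∫ x : R2, log (1 + ‖x‖ ^ 2) * ((1:ℝ) + ‖x‖ ^ 2) ^ (-η) = π / (η - 1) ^ 2 := by
  have := radial (fun t => log (1 + t ^ 2) * ((1:ℝ) + t ^ 2) ^ (-η))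
  rw [this, oneD2 hη]
  have : η - 1 ≠ 0 := by linarith
  field_simp

lemma int1' (hη : 1 < η) : Integrable (fun x : R2 => ((1:ℝ) + ‖x‖ ^ 2) ^ (-η)) := by
  have h := integrable_rpow_neg_one_add_norm_sq (E := R2) (μ := volume)
    (r := 2 * η) (by simp [finrank_euclideanSpace]; linarith)
  convert h using 2 with x
  ring_nf

lemma int2' (hη : 1 < η) :
    Integrable (fun x : R2 => log (1 + ‖x‖ ^ 2) * ((1:ℝ) + ‖x‖ ^ 2) ^ (-η)) := by
  set ε : ℝ := (η - 1) / 2 with hε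
  have hεpos : 0 < ε := by rw [hε]; linarith
  have hint : Integrable (fun x : R2 => (1 / ε) * ((1:ℝ) + ‖x‖ ^ 2) ^ (ε - η)) := by
    have h := integrable_rpow_neg_one_add_norm_sq (E := R2) (μ := volume)
      (r := 2 * (η - ε)) (by simp [finrank_euclideanSpace, hε]; linarith)
    refine (Integrable.const_mul ?_ (1 / ε))
    convert h using 2 with x
    ring_nf
  refine hint.mono' ?_ (Eventually.of_forall fun x => ?_)
  · exact (((measurable_norm.pow_const 2).const_add 1).log.mul
      (((measurable_norm.pow_const 2).const_add 1).pow measurable_const)).aestronglyMeasurable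
  · have hu : (0:ℝ) < 1 + ‖x‖ ^ 2 := by positivity
    have hlog0 : 0 ≤ log (1 + ‖x‖ ^ 2) := Real.log_nonneg (by nlinarith [sq_nonneg ‖x‖])
    rw [Real.norm_of_nonneg (by positivity)]
    have hle : log (1 + ‖x‖ ^ 2) ≤ (1 + ‖x‖ ^ 2) ^ ε / ε :=
      Real.log_le_rpow_div hu.le hεpos
    calc log (1 + ‖x‖ ^ 2) * ((1:ℝ) + ‖x‖ ^ 2) ^ (-η)
        ≤ ((1 + ‖x‖ ^ 2) ^ ε / ε) * ((1:ℝ) + ‖x‖ ^ 2) ^ (-η) := by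
          apply mul_le_mul_of_nonneg_right hle (by positivity)
      _ = (1 / ε) * ((1:ℝ) + ‖x‖ ^ 2) ^ (ε - η) := by
          rw [show ε - η = ε + (-η) by ring, Real.rpow_add hu]
          ring





lemma upos' (x : R2) : (0:ℝ) < 1 + ‖x‖ ^ 2 := by positivity

theorem stmt_2 (η M : ℝ) (hη : 1 < η) (hM : 0 < M) :
    (∀ ρ : R2 → ℝ, Measurable ρ → (∀ x, 0 ≤ ρ x) → Integrable ρ →
      (∫ x : R2, ρ x) = M →
      Integrable (fun x : R2 => ρ x * Real.log (ρ x)) →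
      Integrable (fun x : R2 => Real.log (1 + ‖x‖ ^ 2) * ρ x) →
      (∫ x : R2, ρ x * Real.log (ρ x / M)) + η * (∫ x : R2, Real.log (1 + ‖x‖ ^ 2) * ρ x)
        ≥ M * Real.log ((η - 1) / π)) ∧
    ((∫ x : R2, (M * ((η - 1) / (π * (1 + ‖x‖ ^ 2) ^ η))) *
          Real.log (M * ((η - 1) / (π * (1 + ‖x‖ ^ 2) ^ η)) / M))
      + η * (∫ x : R2, Real.log (1 + ‖x‖ ^ 2) * (M * ((η - 1) / (π * (1 + ‖x‖ ^ 2) ^ η))))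
      = M * Real.log ((η - 1) / π)) := by
  have ha : (0:ℝ) < η - 1 := by linarith
  have hc : (0:ℝ) < (η - 1) / π := div_pos ha Real.pi_pos
  set c : ℝ := (η - 1) / π with hcdef
  have hf1 := int1' hη
  have hf2 := int2' hη
  have hv1 := int1 hη
  have hv2 := int2 hη
  have hρη : ∀ x : R2, (η - 1) / (π * (1 + ‖x‖ ^ 2) ^ η) = c * ((1:ℝ) + ‖x‖ ^ 2) ^ (-η) := by
    intro x
    rw [Real.rpow_neg (upos' x).le, hcdef]
    field_simp
  constructor
  · intro ρ hmeas hpos hint hmass hent hlog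
    set B : R2 → ℝ := fun x => M * c * ((1:ℝ) + ‖x‖ ^ 2) ^ (-η) with hBdef
    have hBpos : ∀ x, 0 < B x := fun x => by
      have := Real.rpow_pos_of_pos (upos' x) (-η); positivity
    have hBint : Integrable B := hf1.const_mul _
    have hMc : (0:ℝ) < M * c := by positivity
    -- pointwise decomposition of ρ log(ρ/B)
    have hkey : ∀ x, ρ x * log (ρ x / B x)
        = ρ x * log (ρ x) - log (M * c) * ρ x + η * (log (1 + ‖x‖ ^ 2) * ρ x) := by
      intro x
      rcases eq_or_lt_of_le (hpos x) with h0 | h0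
      · simp [← h0]
      · have hB := hBpos x
        rw [Real.log_div h0.ne' hB.ne']
        have hlogB : log (B x) = log (M * c) + (-η) * log (1 + ‖x‖ ^ 2) := by
          rw [hBdef, Real.log_mul hMc.ne' (Real.rpow_pos_of_pos (upos' x) (-η)).ne',
            Real.log_rpow (upos' x)]
        rw [hlogB]; ring
    have hgint : Integrable (fun x : R2 => ρ x * log (ρ x / B x)) := by
      rw [show (fun x : R2 => ρ x * log (ρ x / B x))
          = fun x => ρ x * log (ρ x) - log (M * c) * ρ x + η * (log (1 + ‖x‖ ^ 2) * ρ x)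
          from funext hkey]
      exact (hent.sub (hint.const_mul _)).add (hlog.const_mul η)
    have hgval : ∫ x : R2, ρ x * log (ρ x / B x)
        = (∫ x : R2, ρ x * log (ρ x)) - log (M * c) * M
          + η * ∫ x : R2, log (1 + ‖x‖ ^ 2) * ρ x := by
      rw [show (fun x : R2 => ρ x * log (ρ x / B x))
          = fun x => ρ x * log (ρ x) - log (M * c) * ρ x + η * (log (1 + ‖x‖ ^ 2) * ρ x)
          from funext hkey]
      have h1 : Integrable (fun x : R2 => ρ x * log (ρ x) - log (M * c) * ρ x) :=
        hent.sub (hint.const_mul _)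
      rw [integral_add h1 (hlog.const_mul η),
        integral_sub hent (hint.const_mul _), integral_const_mul, integral_const_mul, hmass]
    have hBval : ∫ x : R2, B x = M := by
      rw [hBdef]
      simp_rw [mul_assoc]
      rw [integral_const_mul, integral_const_mul, hv1, hcdef]
      field_simp
    -- pointwise inequality
    have hpt : ∀ x, ρ x - B x ≤ ρ x * log (ρ x / B x) := by
      intro x
      rcases eq_or_lt_of_le (hpos x) with h0 | h0
      · simp [← h0]; exact (hBpos x).le
      · have hB := hBpos x
        have h1 : log (B x / ρ x) ≤ B x / ρ x - 1 :=
          Real.log_le_sub_one_of_pos (div_pos hB h0)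
        have h2 : log (B x / ρ x) = - log (ρ x / B x) := by
          rw [← Real.log_inv]; congr 1; rw [inv_div]
        rw [h2] at h1
        have h3 : ρ x * (-log (ρ x / B x)) ≤ ρ x * (B x / ρ x - 1) :=
          mul_le_mul_of_nonneg_left h1 h0.le
        rw [mul_sub, mul_div_cancel₀ _ h0.ne'] at h3
        nlinarith
    have hmono : (0:ℝ) ≤ ∫ x : R2, ρ x * log (ρ x / B x) := by
      have hsub : Integrable (fun x : R2 => ρ x - B x) := hint.sub hBint
      have := integral_mono hsub hgint hpt
      rwa [integral_sub hint hBint, hmass, hBval, sub_self] at this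
    -- relate target first integral
    have hfirst : ∫ x : R2, ρ x * log (ρ x / M)
        = (∫ x : R2, ρ x * log (ρ x)) - log M * M := by
      have : ∀ x, ρ x * log (ρ x / M) = ρ x * log (ρ x) - log M * ρ x := by
        intro x
        rcases eq_or_lt_of_le (hpos x) with h0 | h0
        · simp [← h0]
        · rw [Real.log_div h0.ne' hM.ne']; ring
      rw [show (fun x : R2 => ρ x * log (ρ x / M))
          = fun x => ρ x * log (ρ x) - log M * ρ x from funext this]
      rw [integral_sub hent (hint.const_mul _), integral_const_mul, hmass]
    have hlogMc : log (M * c) = log M + log c := Real.log_mul hM.ne' hc.ne'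
    rw [ge_iff_le, hfirst]
    rw [hgval, hlogMc] at hmono
    linarith
  · -- equality case
    have hρpt : ∀ x : R2, (M * ((η - 1) / (π * (1 + ‖x‖ ^ 2) ^ η))) *
          log (M * ((η - 1) / (π * (1 + ‖x‖ ^ 2) ^ η)) / M)
        = (M * c * log c) * ((1:ℝ) + ‖x‖ ^ 2) ^ (-η)
          - (M * c * η) * (log (1 + ‖x‖ ^ 2) * ((1:ℝ) + ‖x‖ ^ 2) ^ (-η)) := by
      intro x
      rw [hρη x, mul_div_cancel_left₀ _ hM.ne',
        Real.log_mul hc.ne' (Real.rpow_pos_of_pos (upos' x) (-η)).ne',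
        Real.log_rpow (upos' x)]
      ring
    have hρpt2 : ∀ x : R2, log (1 + ‖x‖ ^ 2) * (M * ((η - 1) / (π * (1 + ‖x‖ ^ 2) ^ η)))
        = (M * c) * (log (1 + ‖x‖ ^ 2) * ((1:ℝ) + ‖x‖ ^ 2) ^ (-η)) := by
      intro x; rw [hρη x]; ring
    rw [show (fun x : R2 => (M * ((η - 1) / (π * (1 + ‖x‖ ^ 2) ^ η))) *
          log (M * ((η - 1) / (π * (1 + ‖x‖ ^ 2) ^ η)) / M))
        = fun x => (M * c * log c) * ((1:ℝ) + ‖x‖ ^ 2) ^ (-η)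
          - (M * c * η) * (log (1 + ‖x‖ ^ 2) * ((1:ℝ) + ‖x‖ ^ 2) ^ (-η)) from funext hρpt]
    rw [show (fun x : R2 => log (1 + ‖x‖ ^ 2) * (M * ((η - 1) / (π * (1 + ‖x‖ ^ 2) ^ η))))
        = fun x => (M * c) * (log (1 + ‖x‖ ^ 2) * ((1:ℝ) + ‖x‖ ^ 2) ^ (-η)) from funext hρpt2]
    have h1 : Integrable (fun x : R2 => (M * c * log c) * ((1:ℝ) + ‖x‖ ^ 2) ^ (-η)) :=
      hf1.const_mul _
    have h2 : Integrable (fun x : R2 =>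
        (M * c * η) * (log (1 + ‖x‖ ^ 2) * ((1:ℝ) + ‖x‖ ^ 2) ^ (-η))) := hf2.const_mul _
    rw [integral_sub h1 h2, integral_const_mul, integral_const_mul, integral_const_mul, hv1, hv2,
      hcdef]
    have hπ := Real.pi_ne_zero
    field_simp
    ring
end
end

section
/- Let η ∈ (0,1] and M > 0. Then the functional J_η[ρ] := ∫_{ℝ²} ρ log(ρ/M) dx + η ∫_{ℝ²} log(1+|x|²) ρ(x) dx is unbounded from below on the set of measurable nonnegative functions ρ on ℝ² with ∫_{ℝ²} ρ dx = M: for every C ∈ ℝ there exists such a ρ, with ρ log ρ and log(1+|x|²)ρ integrable, satisfying J_η[ρ] < C. -/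
open MeasureTheory Real

noncomputable section

lemma oneD (p : ℝ) (hp : 1 < p) :
    IntegrableOn (fun y : ℝ => y * (1 + y ^ 2) ^ (-p)) (Set.Ioi 0) ∧
    ∫ y in Set.Ioi (0:ℝ), y * (1 + y ^ 2) ^ (-p) = 1 / (2 * (p - 1)) := by
  have hε : 0 < p - 1 := by linarith
  set g : ℝ → ℝ := fun y => -(1 + y ^ 2) ^ (1 - p) / (2 * (p-1)) with hg
  have hderiv : ∀ y ∈ Set.Ici (0:ℝ), HasDerivAt g (y * (1 + y ^ 2) ^ (-p)) y := by
    intro y _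
    have h1 : HasDerivAt (fun y : ℝ => 1 + y ^ 2) (2 * y) y := by
      simpa using ((hasDerivAt_pow 2 y).const_add 1)
    have hpos : (0:ℝ) < 1 + y ^ 2 := by positivity
    have h2 := h1.rpow_const (p := 1 - p) (Or.inl hpos.ne')
    have h3 := (h2.neg).div_const (2 * (p-1))
    have he : 1 - p - 1 = -p := by ring
    have h4 : y * (1 + y ^ 2) ^ (-p) = -(2 * y * (1 - p) * (1 + y ^ 2) ^ (1 - p - 1)) / (2 * (p - 1)) := by
      rw [he]
      field_simp
      ring
    rw [h4]
    exact h3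
  have hnonneg : ∀ y ∈ Set.Ioi (0:ℝ), 0 ≤ y * (1 + y ^ 2) ^ (-p) := by
    intro y hy
    exact mul_nonneg (le_of_lt hy) (Real.rpow_nonneg (by positivity) _)
  have htend : Filter.Tendsto g Filter.atTop (nhds 0) := by
    have h1 : Filter.Tendsto (fun y : ℝ => 1 + y ^ 2) Filter.atTop Filter.atTop :=
      Filter.tendsto_atTop_add_const_left _ 1 (Filter.tendsto_pow_atTop two_ne_zero)
    have h2 := (tendsto_rpow_neg_atTop hε).comp h1
    have h3 := (h2.neg).div_const (2 * (p-1))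
    simpa using h3
  have hint := integrableOn_Ioi_deriv_of_nonneg' hderiv hnonneg htend
  refine ⟨hint, ?_⟩
  rw [integral_Ioi_of_hasDerivAt_of_nonneg' hderiv hnonneg htend]
  have : ((1:ℝ) + 0 ^ 2) = 1 := by norm_num
  simp only [hg, this, Real.one_rpow]
  field_simp
  ring

lemma ball_vol : (volume (Metric.ball (0:R2) 1)).toReal = π := by
  rw [EuclideanSpace.volume_ball]
  have h2 : ((Fintype.card (Fin 2) : ℝ) / 2 + 1) = 2 := by norm_num
  norm_num [Real.sq_sqrt Real.pi_nonneg, Real.Gamma_two, ENNReal.toReal_ofReal Real.pi_nonneg]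

lemma intP (p : ℝ) (hp : 1 < p) :
    Integrable (fun x : R2 => (1 + ‖x‖ ^ 2) ^ (-p)) := by
  have h : (2 : ℝ) < 2 * p := by linarith
  have := integrable_rpow_neg_one_add_norm_sq (E := R2) (μ := volume)
    (r := 2 * p) (by simpa [finrank_euclideanSpace_fin] using h)
  have he : -(2 * p) / 2 = -p := by ring
  simpa [he] using this

lemma twoD (p : ℝ) (hp : 1 < p) :
    ∫ x : R2, (1 + ‖x‖ ^ 2) ^ (-p) = π / (p - 1) := by
  have h := integral_fun_norm_addHaar (volume : Measure R2)
    (fun y : ℝ => (1 + y ^ 2) ^ (-p))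
  have hd : Module.finrank ℝ R2 = 2 := finrank_euclideanSpace_fin
  rw [hd] at h
  simp only [smul_eq_mul, pow_one, nsmul_eq_mul, Nat.cast_ofNat] at h
  have h1 : ∫ y in Set.Ioi (0:ℝ), y ^ (2 - 1) * (1 + y ^ 2) ^ (-p)
      = 1 / (2 * (p - 1)) := by
    simpa using (oneD p hp).2
  rw [h1, measureReal_def, ball_vol] at h
  rw [h]
  have hε : p - 1 ≠ 0 := by intro h'; linarith [sub_eq_zero.mp h']
  field_simp

lemma intLog (p : ℝ) (hp : 1 < p) :
    Integrable (fun x : R2 => Real.log (1 + ‖x‖ ^ 2) * (1 + ‖x‖ ^ 2) ^ (-p)) := by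
  set q := (1 + p) / 2 with hq
  have hq1 : 1 < q := by rw [hq]; linarith
  have hqp : 0 < p - q := by rw [hq]; linarith
  refine ((intP q hq1).const_mul (1 / (p - q))).mono' ?_ ?_
  · apply Measurable.aestronglyMeasurable
    have hm : Measurable fun x : R2 => 1 + ‖x‖ ^ 2 := by fun_prop
    exact (Real.measurable_log.comp hm).mul (by fun_prop : Measurable fun x : R2 => (1 + ‖x‖ ^ 2) ^ (-p))
  · filter_upwards with x
    set u : ℝ := 1 + ‖x‖ ^ 2 with hu
    have hu1 : (1:ℝ) ≤ u := le_add_of_nonneg_right (pow_nonneg (norm_nonneg x) 2)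
    have hu0 : (0:ℝ) < u := lt_of_lt_of_le one_pos hu1
    have hlognn : 0 ≤ Real.log u := Real.log_nonneg hu1
    have hrnn : 0 ≤ u ^ (-p) := Real.rpow_nonneg hu0.le _
    rw [Real.norm_eq_abs, abs_of_nonneg (mul_nonneg hlognn hrnn)]
    have hlog : Real.log u ≤ (1 / (p - q)) * u ^ (p - q) := by
      have h1 : (p - q) * Real.log u = Real.log (u ^ (p - q)) :=
        (Real.log_rpow hu0 _).symm
      have h2 : Real.log (u ^ (p - q)) ≤ u ^ (p - q) - 1 :=
        Real.log_le_sub_one_of_pos (Real.rpow_pos_of_pos hu0 _)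
      have h3 : (p - q) * Real.log u ≤ u ^ (p - q) := by
        rw [h1]; linarith
      rw [div_mul_eq_mul_div, one_mul, le_div_iff₀ hqp, mul_comm]
      exact h3
    calc Real.log u * u ^ (-p) ≤ ((1 / (p - q)) * u ^ (p - q)) * u ^ (-p) :=
          mul_le_mul_of_nonneg_right hlog hrnn
      _ = 1 / (p - q) * u ^ (-q) := by
          rw [mul_assoc, ← Real.rpow_add hu0]
          ring_nf

theorem stmt_3 (η M : ℝ) (hη₀ : 0 < η) (hη₁ : η ≤ 1) (hM : 0 < M) :
    ∀ C : ℝ, ∃ ρ : R2 → ℝ, Measurable ρ ∧ (∀ x, 0 ≤ ρ x) ∧ Integrable ρ ∧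
      (∫ x : R2, ρ x) = M ∧
      Integrable (fun x : R2 => ρ x * Real.log (ρ x)) ∧
      Integrable (fun x : R2 => Real.log (1 + ‖x‖ ^ 2) * ρ x) ∧
      (∫ x : R2, ρ x * Real.log (ρ x / M)) +
        η * (∫ x : R2, Real.log (1 + ‖x‖ ^ 2) * ρ x) < C := by
  intro C
  set ε : ℝ := min 1 (π * Real.exp ((C - 1) / M)) with hεdef
  have hε0 : 0 < ε := lt_min one_pos (by positivity)
  set p : ℝ := 1 + ε with hpdef
  have hp : 1 < p := by simp [hpdef]; linarith
  set c : ℝ := M * (ε / π) with hcdef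
  have hc0 : 0 < c := by positivity
  set ρ : R2 → ℝ := fun x => c * (1 + ‖x‖ ^ 2) ^ (-p) with hρdef
  have hmeas : Measurable ρ := by
    have hm : Measurable fun x : R2 => 1 + ‖x‖ ^ 2 := by fun_prop
    exact (by fun_prop : Measurable fun x : R2 => (1 + ‖x‖ ^ 2) ^ (-p)).const_mul c
  have hbase : ∀ x : R2, (0:ℝ) < 1 + ‖x‖ ^ 2 := fun x => by positivity
  have hbase1 : ∀ x : R2, (1:ℝ) ≤ 1 + ‖x‖ ^ 2 :=
    fun x => le_add_of_nonneg_right (pow_nonneg (norm_nonneg x) 2)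
  have hρpos : ∀ x, 0 < ρ x := fun x =>
    mul_pos hc0 (Real.rpow_pos_of_pos (hbase x) _)
  have hρint : Integrable ρ := (intP p hp).const_mul c
  have hρsum : (∫ x : R2, ρ x) = M := by
    rw [hρdef]
    rw [integral_const_mul, twoD p hp]
    have h1 : p - 1 = ε := by rw [hpdef]; ring
    rw [h1, hcdef]
    have hπ : (π : ℝ) ≠ 0 := Real.pi_ne_zero
    field_simp
  have hlogρint : Integrable (fun x : R2 => Real.log (1 + ‖x‖ ^ 2) * ρ x) := by
    have := (intLog p hp).const_mul c
    convert this using 1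
    funext x
    simp only [hρdef]
    ring
  set L : ℝ := ∫ x : R2, Real.log (1 + ‖x‖ ^ 2) * ρ x with hLdef
  have hL0 : 0 ≤ L := integral_nonneg fun x =>
    mul_nonneg (Real.log_nonneg (hbase1 x)) (hρpos x).le
  have hlogc : ∀ x, Real.log (ρ x) = Real.log c + (-p) * Real.log (1 + ‖x‖ ^ 2) := by
    intro x
    rw [hρdef]
    simp only
    rw [Real.log_mul hc0.ne' (Real.rpow_pos_of_pos (hbase x) _).ne',
      Real.log_rpow (hbase x)]
  have hlogdiv : ∀ x, Real.log (ρ x / M) =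
      Real.log (ε / π) + (-p) * Real.log (1 + ‖x‖ ^ 2) := by
    intro x
    have h1 : ρ x / M = (ε / π) * (1 + ‖x‖ ^ 2) ^ (-p) := by
      rw [hρdef, hcdef]
      field_simp
    rw [h1, Real.log_mul (by positivity) (Real.rpow_pos_of_pos (hbase x) _).ne',
      Real.log_rpow (hbase x)]
  have hρlogρint : Integrable (fun x : R2 => ρ x * Real.log (ρ x)) := by
    have heq : (fun x : R2 => ρ x * Real.log (ρ x)) =
        fun x => Real.log c * ρ x + (-p) * (Real.log (1 + ‖x‖ ^ 2) * ρ x) := by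
      funext x; rw [hlogc x]; ring
    rw [heq]
    exact (hρint.const_mul _).add (hlogρint.const_mul _)
  have hint1 : (∫ x : R2, ρ x * Real.log (ρ x / M)) =
      Real.log (ε / π) * M + (-p) * L := by
    have heq : (fun x : R2 => ρ x * Real.log (ρ x / M)) =
        fun x => Real.log (ε / π) * ρ x + (-p) * (Real.log (1 + ‖x‖ ^ 2) * ρ x) := by
      funext x; rw [hlogdiv x]; ring
    rw [heq, integral_add (hρint.const_mul _) (hlogρint.const_mul _),
      integral_const_mul (Real.log (ε / π)), integral_const_mul (-p), hρsum, hLdef]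
  refine ⟨ρ, hmeas, fun x => (hρpos x).le, hρint, hρsum, hρlogρint, hlogρint, ?_⟩
  rw [hint1, ← hLdef]
  have hεle : ε ≤ π * Real.exp ((C - 1) / M) := min_le_right _ _
  have hlogle : Real.log (ε / π) ≤ (C - 1) / M := by
    have h1 : ε / π ≤ Real.exp ((C - 1) / M) := by
      rw [div_le_iff₀ Real.pi_pos]
      linarith [hεle]
    calc Real.log (ε / π) ≤ Real.log (Real.exp ((C - 1) / M)) :=
          Real.log_le_log (by positivity) h1
      _ = (C - 1) / M := Real.log_exp _
  have h1 : Real.log (ε / π) * M ≤ C - 1 := by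
    have := mul_le_mul_of_nonneg_right hlogle hM.le
    rw [div_mul_cancel₀ _ hM.ne'] at this
    linarith
  have h2 : (-p) * L + η * L ≤ 0 := by
    have : (-p) * L + η * L = (η - p) * L := by ring
    rw [this]
    exact mul_nonpos_of_nonpos_of_nonneg (by linarith) hL0
  clear_value L p ε
  linarith
end
end

section
/- Let a, b ∈ ℝ, M > 0, and c < 0. Then the functional F^c_{a,b}[ρ] := a ∫_{ℝ²} log(1+|x|²) ρ dx − (b/M) ∬_{ℝ²×ℝ²} ρ(x)ρ(y) log|x−y| dx dy + c ∫_{ℝ²} ρ log(ρ/M) dx is unbounded from below on the set of measurable nonnegative functions ρ on ℝ² with ∫_{ℝ²} ρ dx = M: for every C ∈ ℝ there exists such a ρ, with all three defining integrals absolutely convergent, satisfying F^c_{a,b}[ρ] < C. -/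
open MeasureTheory Real
open Metric

set_option maxHeartbeats 2000000
noncomputable section

/-- Admissibility of a density `ρ` of mass `M` on `ℝ²`. -/
def Admissible (M : ℝ) (ρ : R2 → ℝ) : Prop :=
  Measurable ρ ∧ (∀ x, 0 ≤ ρ x) ∧ Integrable ρ ∧ (∫ x : R2, ρ x) = M ∧
  Integrable (fun x : R2 => ρ x * Real.log (ρ x)) ∧
  Integrable (fun x : R2 => Real.log (1 + ‖x‖ ^ 2) * ρ x) ∧
  Integrable (fun p : R2 × R2 => ρ p.1 * ρ p.2 * Real.log ‖p.1 - p.2‖)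

/-- The free energy functional with entropy coefficient `c`. -/
def FreeEnergyC (a b c M : ℝ) (ρ : R2 → ℝ) : ℝ :=
  a * (∫ x : R2, Real.log (1 + ‖x‖ ^ 2) * ρ x) -
    (b / M) * (∫ p : R2 × R2, ρ p.1 * ρ p.2 * Real.log ‖p.1 - p.2‖) +
    c * ∫ x : R2, ρ x * Real.log (ρ x / M)

namespace Unbdd

lemma vol_ball (x : R2) (r : ℝ) (hr : 0 ≤ r) :
    volume (ball x r) = ENNReal.ofReal (π * r ^ 2) := by
  rw [EuclideanSpace.volume_ball]
  simp only [Fintype.card_fin]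
  rw [show ((2:ℕ):ℝ)/2 + 1 = 2 by norm_num, Real.Gamma_two, Real.sq_sqrt pi_pos.le]
  rw [← ENNReal.ofReal_pow hr, ← ENNReal.ofReal_mul (by positivity)]
  ring_nf

lemma oneD (r : ℝ) (hr : 0 < r) :
    ∫ y in (0:ℝ)..r, -(y * Real.log y) = r^2/4 - r^2/2 * Real.log r := by
  have h : ∀ x ∈ Set.Ioo (0:ℝ) r, HasDerivAt (fun y => y^2/4 - y^2/2 * Real.log y)
      (-(x * Real.log x)) x := by
    intro x hx
    have h1 : HasDerivAt (fun y : ℝ => y^2/4) (2 * x / 4) x := by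
      simpa using ((hasDerivAt_pow 2 x).div_const 4)
    have h2 : HasDerivAt (fun y : ℝ => y^2/2 * Real.log y)
        ((2:ℕ) * x ^ (2-1) / 2 * Real.log x + x ^ 2 / 2 * x⁻¹) x :=
      ((hasDerivAt_pow 2 x).div_const 2).mul (Real.hasDerivAt_log hx.1.ne')
    have := h1.sub h2
    refine this.congr_deriv ?_
    have hx0 : x ≠ 0 := hx.1.ne'
    field_simp
    ring
  have hml : Continuous (fun y : ℝ => y^2/4 - y/2 * (y * Real.log y)) := by
    exact (continuous_pow 2 |>.div_const 4).sub
      ((continuous_id.div_const 2).mul Real.continuous_mul_log)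
  have hcont : ContinuousOn (fun y : ℝ => y^2/4 - y^2/2 * Real.log y) (Set.Icc 0 r) := by
    have : (fun y : ℝ => y^2/4 - y^2/2 * Real.log y)
        = fun y : ℝ => y^2/4 - y/2 * (y * Real.log y) := by
      funext y; ring
    rw [this]; exact hml.continuousOn
  have hint : IntervalIntegrable (fun y : ℝ => -(y * Real.log y)) volume 0 r :=
    (Real.continuous_mul_log.neg).intervalIntegrable 0 r
  have := intervalIntegral.integral_eq_sub_of_hasDerivAt_of_le hr.le hcont h hint
  rw [this]
  simp [Real.log_zero]

lemma ball_log (r : ℝ) (hr0 : 0 < r) :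
    ∫ z in ball (0:R2) r, (-Real.log ‖z‖) = 2 * π * (r^2/4 - r^2/2 * Real.log r) := by
  classical
  set f : ℝ → ℝ := fun y => if y < r then -Real.log y else 0 with hf
  have hA : ∫ z in ball (0:R2) r, (-Real.log ‖z‖) = ∫ z : R2, f ‖z‖ := by
    rw [← integral_indicator measurableSet_ball]
    congr 1
    funext z
    simp only [Set.indicator, mem_ball_zero_iff, hf]
  have hB := integral_fun_norm_addHaar (volume : Measure R2) f
  have hdim : Module.finrank ℝ R2 = 2 := by
    simp [finrank_euclideanSpace]
  rw [hdim] at hB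
  have hC : ∫ y in Set.Ioi (0:ℝ), y ^ (2-1) • f y = ∫ y in (0:ℝ)..r, -(y * Real.log y) := by
    have : ∀ y ∈ Set.Ioi (0:ℝ), y ^ (2-1) • f y
        = Set.indicator (Set.Ioo 0 r) (fun y => -(y * Real.log y)) y := by
      intro y hy
      simp only [Set.indicator, Set.mem_Ioo, hf, pow_one, smul_eq_mul]
      by_cases h : y < r
      · simp [h, hy.out, mul_comm]
      · simp [h, hy.out]
    rw [setIntegral_congr_fun measurableSet_Ioi this, setIntegral_indicator measurableSet_Ioo,
      Set.inter_eq_self_of_subset_right (Set.Ioo_subset_Ioi_self),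
      intervalIntegral.integral_of_le hr0.le, integral_Ioc_eq_integral_Ioo]
  rw [hA, hB, hC, oneD r hr0]
  have hb1 : (volume (ball (0:R2) 1)).toReal = π := by
    rw [EuclideanSpace.volume_ball]
    simp only [Fintype.card_fin]
    rw [show ((2:ℕ):ℝ)/2 + 1 = 2 by norm_num, Real.Gamma_two, Real.sq_sqrt pi_pos.le]
    simp [ENNReal.toReal_ofReal pi_pos.le]
  rw [measureReal_def, hb1]
  simp only [nsmul_eq_mul, smul_eq_mul]
  ring

def phi (z : R2) : ℝ := max (-Real.log ‖z‖) 0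

lemma phi_nonneg (z : R2) : 0 ≤ phi z := le_max_right _ _

lemma phi_meas : Measurable phi :=
  ((Real.measurable_log.comp measurable_norm).neg).max measurable_const

lemma phi_eq_zero {z : R2} (hz : 1 ≤ ‖z‖) : phi z = 0 := by
  have : 0 ≤ Real.log ‖z‖ := Real.log_nonneg hz
  simp [phi, max_eq_right, neg_nonpos.mpr this]

lemma neg_log_of_phi {t : ℝ} {z : R2} (hz : t < phi z) (ht : 0 < t) : Real.log ‖z‖ < -t := by
  rcases lt_max_iff.mp hz with h | h
  · linarith
  · linarith

lemma phi_integrable : Integrable phi := by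
  refine ⟨phi_meas.aestronglyMeasurable, ?_⟩
  rw [hasFiniteIntegral_iff_ofReal (Filter.Eventually.of_forall phi_nonneg)]
  rw [lintegral_eq_lintegral_meas_lt volume (Filter.Eventually.of_forall phi_nonneg)
    phi_meas.aemeasurable]
  have hle : ∀ t ∈ Set.Ioi (0:ℝ), volume {a : R2 | t < phi a}
      ≤ ENNReal.ofReal (π * Real.exp (-2 * t)) := by
    intro t ht
    have hsub : {a : R2 | t < phi a} ⊆ ball 0 (Real.exp (-t)) := by
      intro a ha
      have hlog := neg_log_of_phi ha ht
      rw [mem_ball_zero_iff]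
      by_contra hcon
      push_neg at hcon
      have := Real.log_le_log (Real.exp_pos _) hcon
      rw [Real.log_exp] at this
      linarith
    calc volume {a : R2 | t < phi a} ≤ volume (ball (0:R2) (Real.exp (-t))) :=
          measure_mono hsub
      _ = ENNReal.ofReal (π * Real.exp (-t) ^ 2) := vol_ball _ _ (Real.exp_pos _).le
      _ = ENNReal.ofReal (π * Real.exp (-2 * t)) := by
          rw [sq, ← Real.exp_add]; ring_nf
  calc ∫⁻ t in Set.Ioi (0:ℝ), volume {a : R2 | t < phi a}
      ≤ ∫⁻ t in Set.Ioi (0:ℝ), ENNReal.ofReal (π * Real.exp (-2 * t)) :=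
        setLIntegral_mono' measurableSet_Ioi hle
    _ < ⊤ := by
        have hint : IntegrableOn (fun t : ℝ => π * Real.exp (-2 * t)) (Set.Ioi 0) :=
          (exp_neg_integrableOn_Ioi 0 two_pos).const_mul π
        have := hint.hasFiniteIntegral
        rw [hasFiniteIntegral_iff_ofReal] at this
        · exact this
        · exact Filter.Eventually.of_forall fun t => by positivity

variable {S : Set R2} {g : R2 → ℝ}

lemma prod_meas (hS : MeasurableSet S) (hgm : Measurable g) :
    Measurable (fun p : R2 × R2 => S.indicator (fun _ => (1:ℝ)) p.1 * g (p.1 - p.2)) :=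
  ((measurable_const.indicator hS).comp measurable_fst).mul
    (hgm.comp (measurable_fst.sub measurable_snd))

lemma prod_integrable (hS : MeasurableSet S) (hSfin : volume S ≠ ⊤) (hgm : Measurable g)
    (hg : Integrable g) (hg0 : ∀ z, 0 ≤ g z) :
    Integrable (fun p : R2 × R2 => S.indicator (fun _ => (1:ℝ)) p.1 * g (p.1 - p.2)) := by
  have hmeas := prod_meas hS hgm
  rw [Measure.volume_eq_prod]
  rw [integrable_prod_iff (hmeas.aestronglyMeasurable)]
  constructor
  · refine Filter.Eventually.of_forall fun x => ?_
    simpa using (hg.comp_sub_left x).const_mul (S.indicator (fun _ => (1:ℝ)) x)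
  · have heq : (fun x : R2 => ∫ y : R2, ‖S.indicator (fun _ => (1:ℝ)) x * g (x - y)‖)
        = S.indicator (fun _ => ∫ z : R2, g z) := by
      funext x
      have h1 : ∀ y : R2, ‖S.indicator (fun _ => (1:ℝ)) x * g (x - y)‖
          = S.indicator (fun _ => (1:ℝ)) x * g (x - y) := by
        intro y
        refine Real.norm_of_nonneg (mul_nonneg ?_ (hg0 _))
        exact Set.indicator_nonneg (fun _ _ => zero_le_one) x
      simp_rw [h1, integral_const_mul, integral_sub_left_eq_self g volume x]
      by_cases hx : x ∈ S <;> simp [hx]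
    rw [heq]
    rw [integrable_indicator_iff hS]
    exact integrableOn_const hSfin

lemma prod_integral (hS : MeasurableSet S) (hSfin : volume S ≠ ⊤) (hgm : Measurable g)
    (hg : Integrable g) (hg0 : ∀ z, 0 ≤ g z) :
    ∫ p : R2 × R2, S.indicator (fun _ => (1:ℝ)) p.1 * g (p.1 - p.2)
      = (volume S).toReal * ∫ z : R2, g z := by
  have hint := prod_integrable hS hSfin hgm hg hg0
  rw [Measure.volume_eq_prod] at hint ⊢
  rw [integral_prod _ hint]
  have heq : (fun x : R2 => ∫ y : R2, S.indicator (fun _ => (1:ℝ)) x * g (x - y))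
      = S.indicator (fun _ => ∫ z : R2, g z) := by
    funext x
    simp_rw [integral_const_mul, integral_sub_left_eq_self g volume x]
    by_cases hx : x ∈ S <;> simp [hx]
  rw [heq, integral_indicator_const _ hS, smul_eq_mul, measureReal_def]

/-- The constant in the upper bound. -/
def Kconst (a b c M m : ℝ) : ℝ :=
  |a| * (Real.log 17 * M)
    + (|b| / M) * (Real.log 8 * M^2 + 2*m^2 + M^2 * (∫ z : R2, phi z) / π)
    + c*m*Real.log (m/(π*M)) + c*(M-m)*Real.log ((M-m)/(π*M))

lemma log_abs_bound {t : ℝ} (h0 : 0 ≤ t) (h8 : t < 8) :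
    |Real.log t| ≤ Real.log 8 + max (-Real.log t) 0 := by
  have hlog8 : (0:ℝ) ≤ Real.log 8 := Real.log_nonneg (by norm_num)
  rw [abs_le]
  constructor
  · rcases le_or_gt (Real.log t) 0 with h | h
    · have : max (-Real.log t) 0 = -Real.log t := max_eq_left (by linarith)
      rw [this]; linarith
    · have : (0:ℝ) ≤ max (-Real.log t) 0 := le_max_right _ _
      linarith
  · have hle : Real.log t ≤ Real.log 8 := by
      rcases eq_or_lt_of_le h0 with h | h
      · rw [← h]; simpa using hlog8
      · exact Real.log_le_log h h8.le
    have : (0:ℝ) ≤ max (-Real.log t) 0 := le_max_right _ _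
    linarith

lemma main_est (a b c M m s : ℝ) (hM : 0 < M) (hm0 : 0 < m) (hmM : m ≤ M/2)
    (hs0 : 0 < s) (hs1 : s ≤ 1/2) :
    ∃ ρ : R2 → ℝ, Admissible M ρ ∧
      FreeEnergyC a b c M ρ ≤ Kconst a b c M m
        + (4 * |b| * m^2/M + 2*c*m) * (-Real.log s) := by
  have hπ : (0:ℝ) < π := pi_pos
  have hs2 : (0:ℝ) < s^2 := by positivity
  have hMm : 0 < M - m := by linarith
  set q : R2 := EuclideanSpace.single 0 (3:ℝ) with hq_def
  have hq : ‖q‖ = 3 := by rw [hq_def, EuclideanSpace.norm_single]; norm_num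
  set A : Set R2 := ball 0 s with hA_def
  set B : Set R2 := ball q 1 with hB_def
  set h : ℝ := m/(π*s^2) with hh_def
  set k : ℝ := (M-m)/π with hk_def
  have hh0 : 0 < h := by positivity
  have hk0 : 0 < k := by positivity
  set ρ : R2 → ℝ := fun x => A.indicator (fun _ => h) x + B.indicator (fun _ => k) x with hρ_def
  -- geometry
  have hAn : ∀ x ∈ A, ‖x‖ < s := fun x hx => mem_ball_zero_iff.mp hx
  have hB2 : ∀ x ∈ B, 2 < ‖x‖ := by
    intro x hx
    have h1 : ‖x - q‖ < 1 := by
      have := mem_ball.mp hx; rwa [dist_eq_norm] at this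
    have h2 : ‖q‖ - ‖x‖ ≤ ‖q - x‖ := norm_sub_norm_le q x
    rw [norm_sub_rev] at h2
    rw [hq] at h2
    linarith
  have hB4 : ∀ x ∈ B, ‖x‖ < 4 := by
    intro x hx
    have h1 : ‖x - q‖ < 1 := by
      have := mem_ball.mp hx; rwa [dist_eq_norm] at this
    have h2 : ‖x‖ - ‖q‖ ≤ ‖x - q‖ := norm_sub_norm_le x q
    rw [hq] at h2
    linarith
  have hAnotB : ∀ x ∈ A, x ∉ B := by
    intro x hxA hxB
    have := hAn x hxA
    have := hB2 x hxB
    linarith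
  have hBnotA : ∀ x ∈ B, x ∉ A := by
    intro x hxB hxA
    exact hAnotB x hxA hxB
  -- density values
  have hρA : ∀ x ∈ A, ρ x = h := by
    intro x hx
    rw [hρ_def]
    simp only [Set.indicator_of_mem hx, Set.indicator_of_notMem (hAnotB x hx), add_zero]
  have hρB : ∀ x ∈ B, ρ x = k := by
    intro x hx
    rw [hρ_def]
    simp only [Set.indicator_of_mem hx, Set.indicator_of_notMem (hBnotA x hx), zero_add]
  have hρ0 : ∀ x, x ∉ A → x ∉ B → ρ x = 0 := by
    intro x hxA hxB
    rw [hρ_def]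
    simp only [Set.indicator_of_notMem hxA, Set.indicator_of_notMem hxB, add_zero]
  have hρ_nonneg : ∀ x, 0 ≤ ρ x := by
    intro x
    exact add_nonneg (Set.indicator_nonneg (fun _ _ => hh0.le) x)
      (Set.indicator_nonneg (fun _ _ => hk0.le) x)
  have hρ_meas : Measurable ρ :=
    (measurable_const.indicator measurableSet_ball).add
      (measurable_const.indicator measurableSet_ball)
  -- volumes
  have mbA : MeasurableSet A := measurableSet_ball
  have mbB : MeasurableSet B := measurableSet_ball
  have hvolA : (volume A).toReal = π * s^2 := by
    rw [hA_def, vol_ball _ _ hs0.le, ENNReal.toReal_ofReal (by positivity)]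
  have hvolB : (volume B).toReal = π := by
    rw [hB_def, vol_ball _ _ zero_le_one, ENNReal.toReal_ofReal (by positivity)]
    norm_num
  have finA : volume A ≠ ⊤ := by
    rw [hA_def, vol_ball _ _ hs0.le]; exact ENNReal.ofReal_ne_top
  have finB : volume B ≠ ⊤ := by
    rw [hB_def, vol_ball _ _ zero_le_one]; exact ENNReal.ofReal_ne_top
  -- simple-function integrals
  have hind_int : ∀ α β : ℝ,
      Integrable (fun x : R2 => A.indicator (fun _ => α) x + B.indicator (fun _ => β) x) := by
    intro α β
    exact ((integrable_indicator_iff mbA).mpr (integrableOn_const finA)).add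
      ((integrable_indicator_iff mbB).mpr (integrableOn_const finB))
  have hind_val : ∀ α β : ℝ,
      (∫ x : R2, (A.indicator (fun _ => α) x + B.indicator (fun _ => β) x))
        = α * (π * s^2) + β * π := by
    intro α β
    rw [integral_add ((integrable_indicator_iff mbA).mpr (integrableOn_const finA))
      ((integrable_indicator_iff mbB).mpr (integrableOn_const finB)),
      integral_indicator_const _ mbA, integral_indicator_const _ mbB, smul_eq_mul, smul_eq_mul,
      measureReal_def, measureReal_def, hvolA, hvolB]
    ring
  have hρ_int : Integrable ρ := hind_int h k
  have hmass : (∫ x : R2, ρ x) = M := by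
    rw [hρ_def, hind_val, hh_def, hk_def]
    field_simp
    ring
  -- composition with G, G 0 = 0
  have hcomp : ∀ (G : ℝ → ℝ), G 0 = 0 → ∀ x,
      A.indicator (fun _ => G h) x + B.indicator (fun _ => G k) x = G (ρ x) := by
    intro G hG0 x
    by_cases hxA : x ∈ A
    · simp only [Set.indicator_of_mem hxA, Set.indicator_of_notMem (hAnotB x hxA), add_zero,
        hρA x hxA]
    · by_cases hxB : x ∈ B
      · simp only [Set.indicator_of_notMem hxA, Set.indicator_of_mem hxB, zero_add, hρB x hxB]
      · simp only [Set.indicator_of_notMem hxA, Set.indicator_of_notMem hxB, add_zero,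
          hρ0 x hxA hxB, hG0]
  have hEnt_int : Integrable (fun x : R2 => ρ x * Real.log (ρ x)) := by
    refine (hind_int (h * Real.log h) (k * Real.log k)).congr
      (Filter.Eventually.of_forall fun x => ?_)
    exact hcomp (fun t => t * Real.log t) (by simp) x
  have hT3val : (∫ x : R2, ρ x * Real.log (ρ x / M))
      = m * Real.log (h/M) + (M-m) * Real.log (k/M) := by
    have heq : (∫ x : R2, ρ x * Real.log (ρ x / M))
        = ∫ x : R2, (A.indicator (fun _ => h * Real.log (h/M)) x
            + B.indicator (fun _ => k * Real.log (k/M)) x) := by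
      refine integral_congr_ae (Filter.Eventually.of_forall fun x => ?_)
      exact (hcomp (fun t => t * Real.log (t / M)) (by simp) x).symm
    rw [heq, hind_val, hh_def, hk_def]
    field_simp
  -- the a-term
  have hψ_meas : Measurable (fun x : R2 => Real.log (1 + ‖x‖^2) * ρ x) :=
    (Real.measurable_log.comp (measurable_const.add (measurable_norm.pow_const 2))).mul hρ_meas
  have hψ_bound : ∀ x : R2, ‖Real.log (1 + ‖x‖^2) * ρ x‖ ≤ Real.log 17 * ρ x := by
    intro x
    have hx1 : (1:ℝ) ≤ 1 + ‖x‖^2 := by nlinarith [norm_nonneg x]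
    have h1 : 0 ≤ Real.log (1 + ‖x‖^2) := Real.log_nonneg hx1
    rw [Real.norm_of_nonneg (mul_nonneg h1 (hρ_nonneg x))]
    by_cases hxA : x ∈ A
    · have hx4 : ‖x‖ < 4 := by have := hAn x hxA; linarith
      have : Real.log (1 + ‖x‖^2) ≤ Real.log 17 :=
        Real.log_le_log (by positivity) (by nlinarith [norm_nonneg x])
      exact mul_le_mul_of_nonneg_right this (hρ_nonneg x)
    · by_cases hxB : x ∈ B
      · have hx4 : ‖x‖ < 4 := hB4 x hxB
        have : Real.log (1 + ‖x‖^2) ≤ Real.log 17 :=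
          Real.log_le_log (by positivity) (by nlinarith [norm_nonneg x])
        exact mul_le_mul_of_nonneg_right this (hρ_nonneg x)
      · rw [hρ0 x hxA hxB]
        simp
  have hψ_int : Integrable (fun x : R2 => Real.log (1 + ‖x‖^2) * ρ x) :=
    Integrable.mono' (hρ_int.const_mul (Real.log 17)) hψ_meas.aestronglyMeasurable
      (Filter.Eventually.of_forall hψ_bound)
  have hT1 : |∫ x : R2, Real.log (1 + ‖x‖^2) * ρ x| ≤ Real.log 17 * M := by
    calc |∫ x : R2, Real.log (1 + ‖x‖^2) * ρ x|
        ≤ ∫ x : R2, ‖Real.log (1 + ‖x‖^2) * ρ x‖ := by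
          rw [← Real.norm_eq_abs]; exact norm_integral_le_integral_norm _
      _ ≤ ∫ x : R2, Real.log 17 * ρ x :=
          integral_mono hψ_int.norm (hρ_int.const_mul _) hψ_bound
      _ = Real.log 17 * M := by rw [integral_const_mul, hmass]
  -- interaction term
  set φ2 : R2 → ℝ := (ball (0:R2) (2*s)).indicator phi with hφ2_def
  have hφ2_meas : Measurable φ2 := phi_meas.indicator measurableSet_ball
  have hφ2_int : Integrable φ2 := phi_integrable.indicator measurableSet_ball
  have hφ2_nonneg : ∀ z, 0 ≤ φ2 z := fun z =>
    Set.indicator_nonneg (fun z _ => phi_nonneg z) z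
  have h2s1 : 2*s ≤ 1 := by linarith
  have hφ2_val : (∫ z : R2, φ2 z) = 2*π*((2*s)^2/4 - (2*s)^2/2 * Real.log (2*s)) := by
    rw [hφ2_def, integral_indicator measurableSet_ball]
    rw [← ball_log (2*s) (by linarith)]
    refine setIntegral_congr_fun measurableSet_ball fun z hz => ?_
    have hz1 : ‖z‖ ≤ 1 := le_trans (mem_ball_zero_iff.mp hz).le h2s1
    have : Real.log ‖z‖ ≤ 0 := Real.log_nonpos (norm_nonneg _) hz1
    simp only [phi]
    rw [max_eq_left (by linarith)]
  set κ : ℝ := ∫ z : R2, phi z with hκ_def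
  have hκ0 : 0 ≤ κ := integral_nonneg phi_nonneg
  have hρρ_int : Integrable (fun p : R2 × R2 => ρ p.1 * ρ p.2) := by
    rw [Measure.volume_eq_prod]; exact hρ_int.mul_prod hρ_int
  have hρρ_val : (∫ p : R2 × R2, ρ p.1 * ρ p.2) = M^2 := by
    rw [Measure.volume_eq_prod, integral_prod_mul, hmass]; ring
  set Φ : R2 × R2 → ℝ := fun p =>
    Real.log 8 * (ρ p.1 * ρ p.2)
      + (h^2 * (A.indicator (fun _ => (1:ℝ)) p.1 * φ2 (p.1 - p.2))
        + k^2 * (B.indicator (fun _ => (1:ℝ)) p.1 * phi (p.1 - p.2))) with hΦ_def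
  have hΦ_int : Integrable Φ :=
    (hρρ_int.const_mul _).add
      (((prod_integrable mbA finA hφ2_meas hφ2_int hφ2_nonneg).const_mul _).add
        ((prod_integrable mbB finB phi_meas phi_integrable phi_nonneg).const_mul _))
  have hind01 : ∀ (S : Set R2) (x : R2), 0 ≤ S.indicator (fun _ => (1:ℝ)) x :=
    fun S x => Set.indicator_nonneg (fun _ _ => zero_le_one) x
  have hlog8 : (0:ℝ) ≤ Real.log 8 := Real.log_nonneg (by norm_num)
  have hΦ0 : ∀ p, 0 ≤ Φ p := by
    intro p
    refine add_nonneg (mul_nonneg hlog8 (mul_nonneg (hρ_nonneg _) (hρ_nonneg _)))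
      (add_nonneg (mul_nonneg (by positivity)
        (mul_nonneg (hind01 _ _) (hφ2_nonneg _)))
        (mul_nonneg (by positivity) (mul_nonneg (hind01 _ _) (phi_nonneg _))))
  have claim2 : ∀ x y : R2, ρ x * ρ y * phi (x - y)
      ≤ h^2 * (A.indicator (fun _ => (1:ℝ)) x * φ2 (x - y))
        + k^2 * (B.indicator (fun _ => (1:ℝ)) x * phi (x - y)) := by
    intro x y
    by_cases hxA : x ∈ A
    · rw [Set.indicator_of_mem hxA, Set.indicator_of_notMem (hAnotB x hxA)]
      by_cases hyA : y ∈ A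
      · have hxy : ‖x - y‖ < 2*s := by
          have := norm_sub_le x y
          have := hAn x hxA; have := hAn y hyA
          linarith
        have hφ2eq : φ2 (x - y) = phi (x - y) := by
          rw [hφ2_def, Set.indicator_of_mem (mem_ball_zero_iff.mpr hxy)]
        rw [hρA x hxA, hρA y hyA, hφ2eq]
        simp only [one_mul, zero_mul, mul_zero, add_zero]
        nlinarith [phi_nonneg (x - y)]
      · by_cases hyB : y ∈ B
        · have hphi0 : phi (x - y) = 0 := by
            refine phi_eq_zero ?_
            have h1 : ‖y‖ - ‖x‖ ≤ ‖y - x‖ := norm_sub_norm_le y x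
            rw [norm_sub_rev] at h1
            have := hB2 y hyB; have := hAn x hxA
            linarith
          rw [hphi0]
          simp only [mul_zero, add_zero]
          nlinarith [hφ2_nonneg (x - y), phi_nonneg (x - y), sq_nonneg h, sq_nonneg k,
            mul_nonneg (mul_nonneg (hρ_nonneg x) (hρ_nonneg y)) (phi_nonneg (x - y)),
            hind01 A x, hind01 B x]
        · rw [hρ0 y hyA hyB]
          simp only [mul_zero, zero_mul]
          nlinarith [hφ2_nonneg (x - y), phi_nonneg (x - y), sq_nonneg h, sq_nonneg k,
            mul_nonneg (mul_nonneg (hρ_nonneg x) (hρ_nonneg y)) (phi_nonneg (x - y)),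
            hind01 A x, hind01 B x]
    · by_cases hxB : x ∈ B
      · rw [Set.indicator_of_notMem hxA, Set.indicator_of_mem hxB]
        by_cases hyB : y ∈ B
        · rw [hρB x hxB, hρB y hyB]
          simp only [zero_mul, mul_zero, zero_add, one_mul]
          nlinarith [phi_nonneg (x - y)]
        · by_cases hyA : y ∈ A
          · have hphi0 : phi (x - y) = 0 := by
              refine phi_eq_zero ?_
              have h1 : ‖x‖ - ‖y‖ ≤ ‖x - y‖ := norm_sub_norm_le x y
              have := hB2 x hxB; have := hAn y hyA
              linarith
            rw [hphi0]
            simp only [mul_zero, add_zero, zero_mul]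
            nlinarith [hφ2_nonneg (x - y), phi_nonneg (x - y), sq_nonneg h, sq_nonneg k,
            mul_nonneg (mul_nonneg (hρ_nonneg x) (hρ_nonneg y)) (phi_nonneg (x - y)),
            hind01 A x, hind01 B x]
          · rw [hρ0 y hyA hyB]
            simp only [mul_zero, zero_mul]
            nlinarith [hφ2_nonneg (x - y), phi_nonneg (x - y), sq_nonneg h, sq_nonneg k,
            mul_nonneg (mul_nonneg (hρ_nonneg x) (hρ_nonneg y)) (phi_nonneg (x - y)),
            hind01 A x, hind01 B x]
      · rw [hρ0 x hxA hxB]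
        simp only [zero_mul]
        refine add_nonneg (mul_nonneg (by positivity)
          (mul_nonneg (hind01 _ _) (hφ2_nonneg _)))
          (mul_nonneg (by positivity) (mul_nonneg (hind01 _ _) (phi_nonneg _)))
  have claim1 : ∀ p : R2 × R2, ‖ρ p.1 * ρ p.2 * Real.log ‖p.1 - p.2‖‖ ≤ Φ p := by
    intro p
    obtain ⟨x, y⟩ := p
    simp only
    by_cases hx0 : ρ x = 0
    · rw [hx0]; simp only [zero_mul, norm_zero]; exact hΦ0 (x, y)
    · by_cases hy0 : ρ y = 0
      · rw [hy0]; simp only [mul_zero, zero_mul, norm_zero]; exact hΦ0 (x, y)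
      · have hx4 : ‖x‖ < 4 := by
          by_cases hxA : x ∈ A
          · have := hAn x hxA; linarith
          · by_cases hxB : x ∈ B
            · exact hB4 x hxB
            · exact absurd (hρ0 x hxA hxB) hx0
        have hy4 : ‖y‖ < 4 := by
          by_cases hyA : y ∈ A
          · have := hAn y hyA; linarith
          · by_cases hyB : y ∈ B
            · exact hB4 y hyB
            · exact absurd (hρ0 y hyA hyB) hy0
        have hxy8 : ‖x - y‖ < 8 := by
          have := norm_sub_le x y; linarith
        have habs : |Real.log ‖x - y‖| ≤ Real.log 8 + phi (x - y) :=
          log_abs_bound (norm_nonneg _) hxy8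
        have hrr : 0 ≤ ρ x * ρ y := mul_nonneg (hρ_nonneg x) (hρ_nonneg y)
        calc ‖ρ x * ρ y * Real.log ‖x - y‖‖
            = ρ x * ρ y * |Real.log ‖x - y‖| := by
              rw [Real.norm_eq_abs, abs_mul, abs_of_nonneg hrr]
          _ ≤ ρ x * ρ y * (Real.log 8 + phi (x - y)) :=
              mul_le_mul_of_nonneg_left habs hrr
          _ = Real.log 8 * (ρ x * ρ y) + ρ x * ρ y * phi (x - y) := by ring
          _ ≤ Φ (x, y) := by
              have := claim2 x y
              rw [hΦ_def]
              simp only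
              linarith
  have hF_meas : Measurable (fun p : R2 × R2 => ρ p.1 * ρ p.2 * Real.log ‖p.1 - p.2‖) :=
    ((hρ_meas.comp measurable_fst).mul (hρ_meas.comp measurable_snd)).mul
      (Real.measurable_log.comp ((measurable_fst.sub measurable_snd).norm))
  have hF_int : Integrable (fun p : R2 × R2 => ρ p.1 * ρ p.2 * Real.log ‖p.1 - p.2‖) :=
    Integrable.mono' hΦ_int hF_meas.aestronglyMeasurable (Filter.Eventually.of_forall claim1)
  have hI1 : Integrable (fun p : R2 × R2 => Real.log 8 * (ρ p.1 * ρ p.2)) :=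
    hρρ_int.const_mul _
  have hIA : Integrable (fun p : R2 × R2 =>
      h^2 * (A.indicator (fun _ => (1:ℝ)) p.1 * φ2 (p.1 - p.2))) :=
    (prod_integrable mbA finA hφ2_meas hφ2_int hφ2_nonneg).const_mul _
  have hIB : Integrable (fun p : R2 × R2 =>
      k^2 * (B.indicator (fun _ => (1:ℝ)) p.1 * phi (p.1 - p.2))) :=
    (prod_integrable mbB finB phi_meas phi_integrable phi_nonneg).const_mul _
  have e1 : (∫ p : R2 × R2, Φ p)
      = (∫ p : R2 × R2, Real.log 8 * (ρ p.1 * ρ p.2))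
        + ∫ p : R2 × R2, (h^2 * (A.indicator (fun _ => (1:ℝ)) p.1 * φ2 (p.1 - p.2))
            + k^2 * (B.indicator (fun _ => (1:ℝ)) p.1 * phi (p.1 - p.2))) :=
    integral_add hI1 (hIA.add hIB)
  have e2 : (∫ p : R2 × R2, (h^2 * (A.indicator (fun _ => (1:ℝ)) p.1 * φ2 (p.1 - p.2))
        + k^2 * (B.indicator (fun _ => (1:ℝ)) p.1 * phi (p.1 - p.2))))
      = (∫ p : R2 × R2, h^2 * (A.indicator (fun _ => (1:ℝ)) p.1 * φ2 (p.1 - p.2)))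
        + ∫ p : R2 × R2, k^2 * (B.indicator (fun _ => (1:ℝ)) p.1 * phi (p.1 - p.2)) :=
    integral_add hIA hIB
  have hΦ_val : (∫ p : R2 × R2, Φ p)
      = Real.log 8 * M^2 + (h^2 * ((volume A).toReal * ∫ z : R2, φ2 z)
        + k^2 * ((volume B).toReal * κ)) := by
    rw [e1, e2, integral_const_mul, integral_const_mul, integral_const_mul, hρρ_val,
      prod_integral mbA finA hφ2_meas hφ2_int hφ2_nonneg,
      prod_integral mbB finB phi_meas phi_integrable phi_nonneg]
  have hT2 : |∫ p : R2 × R2, ρ p.1 * ρ p.2 * Real.log ‖p.1 - p.2‖| ≤ ∫ p : R2 × R2, Φ p := by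
    calc |∫ p : R2 × R2, ρ p.1 * ρ p.2 * Real.log ‖p.1 - p.2‖|
        ≤ ∫ p : R2 × R2, ‖ρ p.1 * ρ p.2 * Real.log ‖p.1 - p.2‖‖ := by
          rw [← Real.norm_eq_abs]; exact norm_integral_le_integral_norm _
      _ ≤ ∫ p : R2 × R2, Φ p := integral_mono hF_int.norm hΦ_int claim1
  -- numeric bounds
  have hlog2s : Real.log (2*s) = Real.log 2 + Real.log s := Real.log_mul two_ne_zero hs0.ne'
  have hAterm : h^2 * ((volume A).toReal * ∫ z : R2, φ2 z)
      ≤ 2*m^2 + 4*m^2 * (-Real.log s) := by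
    rw [hvolA, hφ2_val, hh_def, hlog2s]
    have hlog2 : (0:ℝ) ≤ Real.log 2 := Real.log_nonneg one_le_two
    have key : (m/(π*s^2))^2 * (π * s^2 * (2*π*((2*s)^2/4 - (2*s)^2/2 * (Real.log 2 + Real.log s))))
        = 2*m^2 - 4*m^2*Real.log 2 - 4*m^2*Real.log s := by
      field_simp
      ring
    rw [key]
    nlinarith [sq_nonneg m]
  have hBterm : k^2 * ((volume B).toReal * κ) ≤ M^2 * κ / π := by
    rw [hvolB, hk_def]
    have key : ((M-m)/π)^2 * (π * κ) = (M-m)^2 * κ / π := by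
      field_simp
    rw [key]
    have hMm2 : (M-m)^2 ≤ M^2 := by nlinarith
    have hnum : (M-m)^2 * κ ≤ M^2 * κ := mul_le_mul_of_nonneg_right hMm2 hκ0
    exact div_le_div_of_nonneg_right hnum hπ.le
  -- assembly
  refine ⟨ρ, ⟨hρ_meas, hρ_nonneg, hρ_int, hmass, hEnt_int, hψ_int, hF_int⟩, ?_⟩
  have haT1 : a * (∫ x : R2, Real.log (1 + ‖x‖^2) * ρ x) ≤ |a| * (Real.log 17 * M) := by
    calc a * (∫ x : R2, Real.log (1 + ‖x‖^2) * ρ x)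
        ≤ |a * (∫ x : R2, Real.log (1 + ‖x‖^2) * ρ x)| := le_abs_self _
      _ = |a| * |∫ x : R2, Real.log (1 + ‖x‖^2) * ρ x| := abs_mul _ _
      _ ≤ |a| * (Real.log 17 * M) := mul_le_mul_of_nonneg_left hT1 (abs_nonneg a)
  have hbT2' : |∫ p : R2 × R2, ρ p.1 * ρ p.2 * Real.log ‖p.1 - p.2‖|
      ≤ Real.log 8 * M^2 + 2*m^2 + M^2*κ/π + 4*m^2*(-Real.log s) := by
    refine hT2.trans ?_
    rw [hΦ_val]
    linarith [hAterm, hBterm]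
  have hbT2 : -(b/M * (∫ p : R2 × R2, ρ p.1 * ρ p.2 * Real.log ‖p.1 - p.2‖))
      ≤ |b|/M * (Real.log 8 * M^2 + 2*m^2 + M^2*κ/π + 4*m^2*(-Real.log s)) := by
    calc -(b/M * (∫ p : R2 × R2, ρ p.1 * ρ p.2 * Real.log ‖p.1 - p.2‖))
        ≤ |b/M * (∫ p : R2 × R2, ρ p.1 * ρ p.2 * Real.log ‖p.1 - p.2‖)| := neg_le_abs _
      _ = |b|/M * |∫ p : R2 × R2, ρ p.1 * ρ p.2 * Real.log ‖p.1 - p.2‖| := by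
          rw [abs_mul, abs_div, abs_of_pos hM]
      _ ≤ |b|/M * (Real.log 8 * M^2 + 2*m^2 + M^2*κ/π + 4*m^2*(-Real.log s)) :=
          mul_le_mul_of_nonneg_left hbT2' (by positivity)
  have hlogh : Real.log (h/M) = Real.log (m/(π*M)) - 2*Real.log s := by
    have heq : h/M = (m/(π*M))/s^2 := by
      rw [hh_def]; field_simp
    rw [heq, Real.log_div (by positivity : (0:ℝ) < m/(π*M)).ne' (by positivity : (0:ℝ) < s^2).ne',
      Real.log_pow]
    norm_num
  have hlogk : Real.log (k/M) = Real.log ((M-m)/(π*M)) := by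
    rw [hk_def]
    congr 1
    field_simp
  have hcT3 : c * (∫ x : R2, ρ x * Real.log (ρ x / M))
      = c*m*Real.log (m/(π*M)) + c*(M-m)*Real.log ((M-m)/(π*M)) + 2*c*m*(-Real.log s) := by
    rw [hT3val, hlogh, hlogk]
    ring
  have distr : |b|/M * (Real.log 8 * M^2 + 2*m^2 + M^2*κ/π + 4*m^2*(-Real.log s))
      = |b|/M * (Real.log 8 * M^2 + 2*m^2 + M^2*κ/π) + 4 * |b| * m^2/M*(-Real.log s) := by
    ring
  have hexp : (4 * |b| * m^2/M + 2*c*m)*(-Real.log s)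
      = 4 * |b| * m^2/M*(-Real.log s) + 2*c*m*(-Real.log s) := by
    ring
  simp only [FreeEnergyC, Kconst]
  rw [← hκ_def]
  linarith [haT1, hbT2, hcT3, distr, hexp]


end Unbdd

theorem stmt_11 (a b c M : ℝ) (hM : 0 < M) (hc : c < 0) :
    ∀ C : ℝ, ∃ ρ : R2 → ℝ, Admissible M ρ ∧ FreeEnergyC a b c M ρ < C := by
  intro C
  set m : ℝ := min (M/2) ((-c)*M/(4*(|b|+1))) with hm_def
  have hb1 : (0:ℝ) < |b| + 1 := by positivity
  have hm0 : 0 < m := lt_min (by linarith) (div_pos (mul_pos (neg_pos.mpr hc) hM) (by positivity))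
  have hmM : m ≤ M/2 := min_le_left _ _
  have hmb : 4*(|b|+1)*m ≤ (-c)*M := by
    have h2 : m ≤ (-c)*M/(4*(|b|+1)) := min_le_right _ _
    rw [le_div_iff₀ (by positivity)] at h2
    linarith
  have hcm : c * m < 0 := mul_neg_of_neg_of_pos hc hm0
  have hcoef : 4 * |b| * m^2/M + 2*c*m ≤ c*m := by
    have h3 : 4 * |b| * m^2/M ≤ -(c*m) := by
      rw [div_le_iff₀ hM]
      nlinarith [abs_nonneg b, hm0.le, sq_nonneg m]
    linarith
  set K := Unbdd.Kconst a b c M m with hK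
  set t : ℝ := max 1 ((K - C + 1)/(-(c*m))) with ht_def
  have ht1 : (1:ℝ) ≤ t := le_max_left _ _
  have hts : 0 < Real.exp (-t) := Real.exp_pos _
  have hs1 : Real.exp (-t) ≤ 1/2 := by
    have he1 : Real.exp (-t) ≤ Real.exp (-1) := Real.exp_le_exp.mpr (by linarith)
    have h2e : (2:ℝ) < Real.exp 1 := by
      have := Real.exp_one_gt_d9
      linarith
    have : Real.exp (-1) = (Real.exp 1)⁻¹ := by rw [Real.exp_neg]
    rw [this] at he1
    have : (Real.exp 1)⁻¹ ≤ 1/2 := by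
      rw [inv_le_iff_one_le_mul₀ (by positivity)]
      nlinarith
    linarith
  obtain ⟨ρ, hadm, hest⟩ := Unbdd.main_est a b c M m (Real.exp (-t)) hM hm0 hmM hts hs1
  refine ⟨ρ, hadm, ?_⟩
  have hlog : -Real.log (Real.exp (-t)) = t := by rw [Real.log_exp]; ring
  rw [hlog] at hest
  have ht0 : 0 ≤ t := by linarith
  have step1 : (4 * |b| * m^2/M + 2*c*m) * t ≤ (c*m) * t :=
    mul_le_mul_of_nonneg_right hcoef ht0
  have step2 : (c*m) * t ≤ (c*m) * ((K - C + 1)/(-(c*m))) :=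
    mul_le_mul_of_nonpos_left (le_max_right _ _) hcm.le
  have step3 : (c*m) * ((K - C + 1)/(-(c*m))) = -(K - C + 1) := by
    rw [mul_div_assoc', mul_comm, mul_div_assoc, div_neg, div_self hcm.ne, mul_neg, mul_one]
  linarith
end
end
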